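/- If 1 < δ_a ≤ δ_b, and p*_a, p*_b denote the unique fixed points in [u0, v0] of the operators T_a, T_b obtained by using δ_a and δ_b respectively in the definition of T (with the same c and g), then p*_a(s) ≤ p*_b(s) for all s ∈ [0,1]. -/

import Mathlib

open Set Filter

noncomputable def Tmap (c : ℝ → ℝ) (g : ℕ → ℝ) (δ : ℝ) (p : ℝ → ℝ) (s : ℝ) : ℝ :=
  sInf {y : ℝ | ∃ k : ℕ, ∃ t : ℝ, 1 ≤ k ∧ 0 ≤ t ∧ t ≤ s ∧
    y = c (s - t) + g k + δ * k * p (t / k)}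

set_option maxHeartbeats 1000000 in
theorem price_monotone_in_delta (c : ℝ → ℝ) (g : ℕ → ℝ) (δa δb : ℝ)
    (hc_diff : DifferentiableOn ℝ c (Set.Icc 0 1))
    (hc_mono : StrictMonoOn c (Set.Icc 0 1))
    (hc_conv : StrictConvexOn ℝ (Set.Icc 0 1) c)
    (hc0 : c 0 = 0) (hc'0 : 0 < deriv c 0)
    (hg_mono : StrictMonoOn g {k : ℕ | 1 ≤ k})
    (hg1 : g 1 = 0) (hg_nonneg : ∀ k : ℕ, 1 ≤ k → 0 ≤ g k)
    (hg_top : Tendsto g atTop atTop)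
    (hδa : 1 < δa) (hδab : δa ≤ δb)
    (pa pb : ℝ → ℝ)
    (hpa_cont : ContinuousOn pa (Set.Icc 0 1))
    (hpa_mem : ∀ s ∈ Set.Icc (0 : ℝ) 1, deriv c 0 * s ≤ pa s ∧ pa s ≤ c s)
    (hpa_fix : ∀ s ∈ Set.Icc (0 : ℝ) 1, Tmap c g δa pa s = pa s)
    (hpb_cont : ContinuousOn pb (Set.Icc 0 1))
    (hpb_mem : ∀ s ∈ Set.Icc (0 : ℝ) 1, deriv c 0 * s ≤ pb s ∧ pb s ≤ c s)
    (hpb_fix : ∀ s ∈ Set.Icc (0 : ℝ) 1, Tmap c g δb pb s = pb s) :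
    ∀ s ∈ Set.Icc (0 : ℝ) 1, pa s ≤ pb s := by
  by_contra hcon
  push_neg at hcon
  obtain ⟨s0, hs0mem, hs0⟩ := hcon
  -- basic positivity facts
  have hδa0 : (0:ℝ) < δa := lt_trans one_pos hδa
  have hδb0 : (0:ℝ) < δb := lt_of_lt_of_le hδa0 hδab
  have hpa0 : pa 0 = 0 := by
    have h := hpa_mem 0 ⟨le_refl 0, zero_le_one⟩
    rw [mul_zero, hc0] at h
    linarith [h.1, h.2]
  have hpb0 : pb 0 = 0 := by
    have h := hpb_mem 0 ⟨le_refl 0, zero_le_one⟩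
    rw [mul_zero, hc0] at h
    linarith [h.1, h.2]
  have hpann : ∀ x ∈ Icc (0:ℝ) 1, 0 ≤ pa x := fun x hx =>
    le_trans (mul_nonneg hc'0.le hx.1) (hpa_mem x hx).1
  have hpbnn : ∀ x ∈ Icc (0:ℝ) 1, 0 ≤ pb x := fun x hx =>
    le_trans (mul_nonneg hc'0.le hx.1) (hpb_mem x hx).1
  have hpapos : ∀ x, 0 < x → x ≤ 1 → 0 < pa x := fun x h1 h2 =>
    lt_of_lt_of_le (mul_pos hc'0 h1) (hpa_mem x ⟨h1.le, h2⟩).1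
  have hpbpos : ∀ x, 0 < x → x ≤ 1 → 0 < pb x := fun x h1 h2 =>
    lt_of_lt_of_le (mul_pos hc'0 h1) (hpb_mem x ⟨h1.le, h2⟩).1
  have hcnn : ∀ x ∈ Icc (0:ℝ) 1, 0 ≤ c x := by
    intro x hx
    rcases eq_or_lt_of_le hx.1 with h | h
    · rw [← h, hc0]
    · rw [← hc0]
      exact (hc_mono ⟨le_refl 0, zero_le_one⟩ hx h).le
  have hcpos : ∀ x, 0 < x → x ≤ 1 → 0 < c x := by
    intro x h1 h2
    rw [← hc0]
    exact hc_mono ⟨le_refl 0, zero_le_one⟩ ⟨h1.le, h2⟩ h1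
  have hs00 : 0 < s0 := by
    rcases eq_or_lt_of_le hs0mem.1 with h | h
    · exfalso; rw [← h, hpa0, hpb0] at hs0; exact lt_irrefl 0 hs0
    · exact h
  -- ratio at s0
  set θ0 : ℝ := pb s0 / pa s0 with hθ0def
  have hpa_s0 : 0 < pa s0 := hpapos s0 hs00 hs0mem.2
  have hθ0pos : 0 < θ0 := div_pos (hpbpos s0 hs00 hs0mem.2) hpa_s0
  have hθ0lt1 : θ0 < 1 := (div_lt_one hpa_s0).mpr hs0
  -- slope of c at 0
  have hdiffAt : DifferentiableAt ℝ c 0 := by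
    by_contra h
    rw [deriv_zero_of_not_differentiableAt h] at hc'0
    exact lt_irrefl 0 hc'0
  have hslope : Tendsto (fun s => c s / s) (nhdsWithin 0 (Ioi (0:ℝ))) (nhds (deriv c 0)) := by
    have h1 := hdiffAt.hasDerivAt
    rw [hasDerivAt_iff_tendsto_slope] at h1
    have h2 := h1.mono_left (nhdsWithin_mono _ (fun x (hx : x ∈ Ioi (0:ℝ)) => ne_of_gt hx))
    have : (fun s => c s / s) = slope c 0 := by
      funext s
      rw [slope_def_field, hc0, sub_zero, sub_zero]
    rw [this]
    exact h2
  have hev : ∀ᶠ s in nhdsWithin 0 (Ioi (0:ℝ)), θ0 * c s < deriv c 0 * s := by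
    have hlt : deriv c 0 < deriv c 0 / θ0 := by
      rw [lt_div_iff₀ hθ0pos]
      nlinarith
    have h1 : ∀ᶠ s in nhdsWithin 0 (Ioi (0:ℝ)), c s / s < deriv c 0 / θ0 :=
      hslope.eventually_lt_const hlt
    filter_upwards [h1, self_mem_nhdsWithin] with s h2 h3
    have hs : (0:ℝ) < s := h3
    rw [div_lt_div_iff₀ hs hθ0pos] at h2
    linarith
  obtain ⟨σ', hσ'pos, hσ'⟩ : ∃ u, 0 < u ∧ ∀ s, 0 < s → s < u → θ0 * c s < deriv c 0 * s := by
    obtain ⟨u, hu, hsub⟩ := mem_nhdsGT_iff_exists_Ioo_subset.mp hev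
    exact ⟨u, hu, fun s h1 h2 => hsub ⟨h1, h2⟩⟩
  set σ : ℝ := min (σ' / 2) s0 with hσdef
  have hσpos : 0 < σ := lt_min (by linarith) hs00
  have hσs0 : σ ≤ s0 := min_le_right _ _
  have hσ1 : σ ≤ 1 := le_trans hσs0 hs0mem.2
  have hσlt : ∀ s, 0 < s → s ≤ σ → θ0 * c s < deriv c 0 * s := by
    intro s h1 h2
    exact hσ' s h1 (by
      have := min_le_left (σ' / 2) s0
      linarith)
  have hθ0pa : ∀ s, 0 < s → s ≤ σ → θ0 * pa s < pb s := by
    intro s h1 h2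
    have hsm : s ∈ Icc (0:ℝ) 1 := ⟨h1.le, le_trans h2 hσ1⟩
    calc θ0 * pa s ≤ θ0 * c s :=
          mul_le_mul_of_nonneg_left (hpa_mem s hsm).2 hθ0pos.le
      _ < deriv c 0 * s := hσlt s h1 h2
      _ ≤ pb s := (hpb_mem s hsm).1
  -- minimize ratio on [σ, 1]
  have hsub01 : Icc σ 1 ⊆ Icc (0:ℝ) 1 := Icc_subset_Icc hσpos.le (le_refl 1)
  have hcont_r : ContinuousOn (fun s => pb s / pa s) (Icc σ 1) := by
    apply ContinuousOn.div (hpb_cont.mono hsub01) (hpa_cont.mono hsub01)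
    intro x hx
    exact ne_of_gt (hpapos x (lt_of_lt_of_le hσpos hx.1) hx.2)
  obtain ⟨sm, hsmmem, hmin⟩ := isCompact_Icc.exists_isMinOn ⟨σ, ⟨le_refl σ, hσ1⟩⟩ hcont_r
  have hsmpos : 0 < sm := lt_of_lt_of_le hσpos hsmmem.1
  have hsm01 : sm ∈ Icc (0:ℝ) 1 := ⟨hsmpos.le, hsmmem.2⟩
  set θ : ℝ := pb sm / pa sm with hθdef
  set P : ℝ := pa sm with hPdef
  have hPpos : 0 < P := hpapos sm hsmpos hsmmem.2
  have hθpos : 0 < θ := div_pos (hpbpos sm hsmpos hsmmem.2) hPpos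
  have hθle0 : θ ≤ θ0 := hmin ⟨hσs0, hs0mem.2⟩
  have hθlt1 : θ < 1 := lt_of_le_of_lt hθle0 hθ0lt1
  have hpbsm : pb sm = θ * P := by
    rw [hθdef, hPdef, div_mul_cancel₀ _ (ne_of_gt hPpos)]
  -- global lower bound pb ≥ θ pa
  have hθlb : ∀ x ∈ Icc (0:ℝ) 1, θ * pa x ≤ pb x := by
    intro x hx
    rcases eq_or_lt_of_le hx.1 with h | h
    · rw [← h, hpa0, hpb0, mul_zero]
    · rcases le_or_gt x σ with h2 | h2
      · have := hθ0pa x h h2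
        have h3 : θ * pa x ≤ θ0 * pa x :=
          mul_le_mul_of_nonneg_right hθle0 (hpann x hx)
        linarith
      · have hxm : x ∈ Icc σ 1 := ⟨h2.le, hx.2⟩
        have h3 : θ ≤ pb x / pa x := hmin hxm
        rw [le_div_iff₀ (hpapos x h hx.2)] at h3
        linarith [h3]
  -- continuity radius around sm
  set α : ℝ := (1 + δa) / (2 * δa) with hαdef
  have hα1 : α < 1 := by
    rw [hαdef, div_lt_one (by linarith)]
    linarith
  have hαpos : 0 < α := by
    rw [hαdef]
    positivity
  have hε : 0 < (1 - α) * P := mul_pos (by linarith) hPpos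
  obtain ⟨ρ, hρpos, hρ⟩ := Metric.continuousWithinAt_iff.mp (hpa_cont sm hsm01) ((1 - α) * P) hε
  set ρ0 : ℝ := min ρ sm / 2 with hρ0def
  have hρ0pos : 0 < ρ0 := by
    rw [hρ0def]
    have := lt_min hρpos hsmpos
    positivity
  have hρ0ρ : ρ0 < ρ := by
    have := min_le_left ρ sm
    rw [hρ0def]; linarith
  have hρ0sm : ρ0 < sm := by
    have := min_le_right ρ sm
    rw [hρ0def]; linarith
  have hρ01 : ρ0 ≤ 1 := le_trans hρ0sm.le hsmmem.2
  have hclose : ∀ t, sm - ρ0 < t → t ≤ sm → α * P < pa t := by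
    intro t h1 h2
    have htm : t ∈ Icc (0:ℝ) 1 := ⟨by linarith, le_trans h2 hsmmem.2⟩
    have hdist : dist t sm < ρ := by
      rw [Real.dist_eq, abs_lt]
      constructor <;> linarith
    have := hρ htm hdist
    rw [Real.dist_eq, abs_lt] at this
    have := this.1
    simp only [hPdef] at *
    linarith
  -- the margin
  have hg2 : 0 < g 2 := by
    rw [← hg1]
    exact hg_mono (show (1:ℕ) ∈ {k : ℕ | 1 ≤ k} by norm_num)
      (show (2:ℕ) ∈ {k : ℕ | 1 ≤ k} by norm_num) (by norm_num)
  set m : ℝ := min ((1 - θ) * c ρ0) (min ((1 - θ) * g 2) (θ * P * (δa - 1) / 2)) with hmdef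
  have hmpos : 0 < m := by
    apply lt_min (mul_pos (by linarith) (hcpos ρ0 hρ0pos hρ01))
    exact lt_min (mul_pos (by linarith) hg2)
      (div_pos (mul_pos (mul_pos hθpos hPpos) (by linarith)) two_pos)
  have hm1 : m ≤ (1 - θ) * c ρ0 := min_le_left _ _
  have hm2 : m ≤ (1 - θ) * g 2 := le_trans (min_le_right _ _) (min_le_left _ _)
  have hm3 : m ≤ θ * P * (δa - 1) / 2 := le_trans (min_le_right _ _) (min_le_right _ _)
  -- key contradiction
  have hkey : θ * P + m ≤ pb sm := by
    rw [← hpb_fix sm hsm01]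
    unfold Tmap
    apply le_csInf
    · exact ⟨c (sm - 0) + g 1 + δb * (1:ℕ) * pb (0 / (1:ℕ)),
        1, 0, le_refl 1, le_refl 0, hsmpos.le, rfl⟩
    · rintro y ⟨k, t, hk, ht0, hts, rfl⟩
      have hkR : (1:ℝ) ≤ (k:ℝ) := by exact_mod_cast hk
      have hkR0 : (0:ℝ) < (k:ℝ) := lt_of_lt_of_le one_pos hkR
      have htk0 : 0 ≤ t / (k:ℝ) := div_nonneg ht0 hkR0.le
      have htk1 : t / (k:ℝ) ≤ 1 :=
        le_trans (div_le_self ht0 hkR) (le_trans hts hsmmem.2)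
      have htkm : t / (k:ℝ) ∈ Icc (0:ℝ) 1 := ⟨htk0, htk1⟩
      have hst1 : sm - t ∈ Icc (0:ℝ) 1 := ⟨by linarith, by linarith [hsmmem.2]⟩
      have h1 : θ * pa (t / (k:ℝ)) ≤ pb (t / (k:ℝ)) := hθlb _ htkm
      have hpatk : 0 ≤ pa (t / (k:ℝ)) := hpann _ htkm
      -- pa sm ≤ candidate value for δa
      have h2 : P ≤ c (sm - t) + g k + δa * (k:ℝ) * pa (t / (k:ℝ)) := by
        rw [hPdef, ← hpa_fix sm hsm01]
        unfold Tmap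
        apply csInf_le
        · refine ⟨0, ?_⟩
          rintro z ⟨k', t', hk', ht0', hts', rfl⟩
          have hk'R : (1:ℝ) ≤ (k':ℝ) := by exact_mod_cast hk'
          have h1' : 0 ≤ t' / (k':ℝ) := div_nonneg ht0' (by linarith)
          have h2' : t' / (k':ℝ) ≤ 1 :=
            le_trans (div_le_self ht0' hk'R) (le_trans hts' hsmmem.2)
          have := hpann _ ⟨h1', h2'⟩
          have := hcnn (sm - t') ⟨by linarith, by linarith [hsmmem.2]⟩
          have := hg_nonneg k' hk'
          positivity
        · exact ⟨k, t, hk, ht0, hts, rfl⟩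
      -- y ≥ θ * candidate + (1-θ)(c + g)
      have hq1 : θ * ((k:ℝ) * pa (t / (k:ℝ))) ≤ (k:ℝ) * pb (t / (k:ℝ)) := by
        calc θ * ((k:ℝ) * pa (t / (k:ℝ))) = (k:ℝ) * (θ * pa (t / (k:ℝ))) := by ring
          _ ≤ (k:ℝ) * pb (t / (k:ℝ)) := mul_le_mul_of_nonneg_left h1 hkR0.le
      have hq2 : δa * (θ * ((k:ℝ) * pa (t / (k:ℝ)))) ≤ δb * ((k:ℝ) * pb (t / (k:ℝ))) := by
        apply le_trans (mul_le_mul_of_nonneg_left hq1 hδa0.le)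
        apply mul_le_mul_of_nonneg_right hδab
        exact mul_nonneg hkR0.le (hpbnn _ htkm)
      have hcst : 0 ≤ c (sm - t) := hcnn _ hst1
      have hgk : 0 ≤ g k := hg_nonneg k hk
      have h1θ : (0:ℝ) ≤ 1 - θ := by linarith
      have f1 : θ * P ≤ θ * c (sm - t) + θ * g k + δa * (θ * ((k:ℝ) * pa (t / (k:ℝ)))) := by
        calc θ * P ≤ θ * (c (sm - t) + g k + δa * (k:ℝ) * pa (t / (k:ℝ))) :=
              mul_le_mul_of_nonneg_left h2 hθpos.le
          _ = θ * c (sm - t) + θ * g k + δa * (θ * ((k:ℝ) * pa (t / (k:ℝ)))) := by ring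
      rcases le_or_gt t (sm - ρ0) with hcase | hcase
      · -- c (sm - t) ≥ c ρ0
        have hc1 : c ρ0 ≤ c (sm - t) :=
          hc_mono.monotoneOn ⟨hρ0pos.le, hρ01⟩ hst1 (by linarith)
        have f3 : (1 - θ) * c ρ0 ≤ (1 - θ) * c (sm - t) :=
          mul_le_mul_of_nonneg_left hc1 h1θ
        have f4 : 0 ≤ (1 - θ) * g k := mul_nonneg h1θ hgk
        linarith only [f1, hq2, f3, f4, hm1]
      · rcases eq_or_lt_of_le hk with hk1 | hk2
        · -- k = 1, t close to sm
          have hkeq : k = 1 := hk1.symm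
          subst hkeq
          simp only [Nat.cast_one, mul_one, div_one] at h1 ⊢
          rw [hg1]
          have hpat : α * P < pa t := hclose t hcase hts
          have htm : t ∈ Icc (0:ℝ) 1 := ⟨by linarith [hρ0pos], le_trans hts hsmmem.2⟩
          have e3 : δa * (θ * pa t) ≤ δb * pb t := by
            apply le_trans (mul_le_mul_of_nonneg_left h1 hδa0.le)
            exact mul_le_mul_of_nonneg_right hδab (hpbnn t htm)
          have e5 : δa * (θ * (α * P)) ≤ δa * (θ * pa t) :=
            mul_le_mul_of_nonneg_left (mul_le_mul_of_nonneg_left hpat.le hθpos.le) hδa0.le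
          have e6 : δa * (θ * (α * P)) = θ * P * (1 + δa) / 2 := by
            rw [hαdef]; field_simp
          linarith only [hcst, hm3, e3, e5, e6]
        · -- k ≥ 2
          have hgk2 : g 2 ≤ g k :=
            hg_mono.monotoneOn (show (2:ℕ) ∈ {k : ℕ | 1 ≤ k} by norm_num)
              (show k ∈ {k : ℕ | 1 ≤ k} from hk) hk2
          have f3 : (1 - θ) * g 2 ≤ (1 - θ) * g k :=
            mul_le_mul_of_nonneg_left hgk2 h1θ
          have f4 : 0 ≤ (1 - θ) * c (sm - t) := mul_nonneg h1θ hcst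
          linarith only [f1, hq2, f3, f4, hm2]
  rw [hpbsm] at hkey
  linarith
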